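/- Let p be a prime, q > 1 a power of p and k ≥ 2 an integer. Then d(k, 0) = 1; that is, the characteristic polynomial det(X·I − U^{(k)}) has exactly one root λ (counted with multiplicity) in the algebraic closure K̄ of 𝔽_q((t)) with v(λ) = 0. -/

import Mathlib

open Polynomial

noncomputable section DrinfeldGM

/-- Integer-argument binomial coefficient `C(c,d)`, equal to `0` whenever any of
`c`, `d`, `c - d` is negative. -/
def intChoose (c d : ℤ) : ℤ :=
  if 0 ≤ c ∧ 0 ≤ d ∧ d ≤ c then (Nat.choose c.toNat d.toNat : ℤ) else 0

/-- The `(i,j)` entry of the matrix of the `U`-operator on `S_k(Γ₁(t))` in the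
Bandini–Valentino basis (here `t` is the polynomial variable `X`).  For `i = j` it is
`(-t)^j C(k-2-j, j)`; for `i = j + h(q-1)` with `h ≠ 0` (equivalently `(q-1) ∣ i - j`,
`i ≠ j`, in which case `h(q-1) = i - j`) it is
`-t^j (C(k-2-i, j-i) + (-1)^{j+1} C(k-2-i, j))`; and it is `0` otherwise. -/
def Uent (F : Type*) [Field F] (q k : ℕ) (i j : ℕ) : Polynomial F :=
  if i = j then
    (-Polynomial.X : Polynomial F) ^ j * ((intChoose ((k : ℤ) - 2 - (j : ℤ)) (j : ℤ) : ℤ) : Polynomial F)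
  else if ((q : ℤ) - 1) ∣ ((i : ℤ) - (j : ℤ)) then
    -((Polynomial.X : Polynomial F) ^ j *
      ((intChoose ((k : ℤ) - 2 - (i : ℤ)) ((j : ℤ) - (i : ℤ)) +
        (-1) ^ (j + 1) * intChoose ((k : ℤ) - 2 - (i : ℤ)) (j : ℤ) : ℤ) : Polynomial F))
  else 0

/-- The representing matrix `U^{(k)} ∈ M_{k-1}(𝔽_q[t])` of the `U`-operator on
`S_k(Γ₁(t))`, rows and columns indexed by `0, …, k-2`. -/
def Umat (F : Type*) [Field F] (q k : ℕ) :
    Matrix (Fin (k - 1)) (Fin (k - 1)) (Polynomial F) :=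
  Matrix.of fun i j => Uent F q k (i : ℕ) (j : ℕ)

/-- A matrix over `𝔽_q[[t]]` is *glissando* if every entry of its `j`-th column is an
`𝔽_q`-multiple of `t^j`. -/
def Glissando {F : Type*} [Field F] {m n : ℕ}
    (B : Matrix (Fin m) (Fin n) (PowerSeries F)) : Prop :=
  ∀ i j, ∃ c : F, B i j = PowerSeries.C c * (PowerSeries.X : PowerSeries F) ^ (j : ℕ)

/-- The inclusion `𝔽_q[t] → 𝔽_q[[t]]`. -/
def polyToPS (F : Type*) [Field F] : Polynomial F →+* PowerSeries F :=
  Polynomial.coeToPowerSeries.ringHom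

/-- The inclusion of `𝔽_q[[t]]` into a fixed algebraic closure `K̄` of `K = 𝔽_q((t))`. -/
def psToKbar (F : Type*) [Field F] :
    PowerSeries F →+* AlgebraicClosure (LaurentSeries F) :=
  (algebraMap (LaurentSeries F) (AlgebraicClosure (LaurentSeries F))).comp
    (algebraMap (PowerSeries F) (LaurentSeries F))

/-- The inclusion `𝔽_q[t] → K̄`. -/
def polyToKbar (F : Type*) [Field F] :
    Polynomial F →+* AlgebraicClosure (LaurentSeries F) :=
  (psToKbar F).comp (polyToPS F)

/-- The element `t` of `K̄`. -/
def tbar (F : Type*) [Field F] : AlgebraicClosure (LaurentSeries F) :=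
  psToKbar F PowerSeries.X

/-- Integrality over `𝔽_q[[t]]` of an element of `K̄`. -/
def IntegralPS (F : Type*) [Field F] (x : AlgebraicClosure (LaurentSeries F)) : Prop :=
  letI : Algebra (PowerSeries F) (AlgebraicClosure (LaurentSeries F)) := (psToKbar F).toAlgebra
  IsIntegral (PowerSeries F) x

/-- `HasVal F λ α` says that `λ ∈ K̄` is nonzero and has valuation `α` for the unique
extension `v` to `K̄` of the `t`-adic valuation with `v(t) = 1`: writing `α = a/b` with
`b > 0`, this means that both `λ^b/t^a` and `t^a/λ^b` are integral over `𝔽_q[[t]]`. -/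
def HasVal (F : Type*) [Field F] (lam : AlgebraicClosure (LaurentSeries F)) (α : ℚ) : Prop :=
  lam ≠ 0 ∧ ∃ a b : ℤ, 0 < b ∧ α = (a : ℚ) / (b : ℚ) ∧
    IntegralPS F (lam ^ b / tbar F ^ a) ∧ IntegralPS F (tbar F ^ a / lam ^ b)

/-- `d(k, α)`: the number of roots `λ` of `det(X·I - U^{(k)})` in `K̄` with `v(λ) = α`,
counted with multiplicity.  This is the dimension of the slope-`α` generalized eigenspace
of the `U`-operator on `S_k(Γ₁(t))`. -/
def dDim (F : Type*) [Field F] (q k : ℕ) (α : ℚ) : ℕ :=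
  letI := Classical.decPred fun lam : AlgebraicClosure (LaurentSeries F) => HasVal F lam α
  Multiset.card <| Multiset.filter (fun lam => HasVal F lam α) <|
    (((Umat F q k).charpoly).map (polyToKbar F)).roots

/-- `det(I - t^l X B)` for a square matrix `B` over `𝔽_q[[t]]`, as a polynomial in `X`
over `𝔽_q[[t]]`. -/
def charSeriesTw (F : Type*) [Field F] {m : ℕ} (l : ℕ)
    (B : Matrix (Fin m) (Fin m) (PowerSeries F)) : Polynomial (PowerSeries F) :=
  Matrix.det (1 - (Polynomial.C ((PowerSeries.X : PowerSeries F) ^ l) * Polynomial.X) •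
    B.map Polynomial.C)

/-- `det(I - X B)` for a square matrix `B` over `𝔽_q[[t]]`. -/
def charSeriesPS (F : Type*) [Field F] {m : ℕ}
    (B : Matrix (Fin m) (Fin m) (PowerSeries F)) : Polynomial (PowerSeries F) :=
  Matrix.det (1 - (Polynomial.X : Polynomial (PowerSeries F)) • B.map Polynomial.C)

/-- `P^{(k)}(X) = det(I - X·U^{(k)}) ∈ 𝔽_q[t][X]`. -/
def Pser (F : Type*) [Field F] (q k : ℕ) : Polynomial (Polynomial F) :=
  Matrix.det (1 - (Polynomial.X : Polynomial (Polynomial F)) • (Umat F q k).map Polynomial.C)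


/-! ### Auxiliary lemmas -/

section Aux

variable {F : Type} [Field F]

lemma mem_maxPow_iff {n : ℕ} {x : PowerSeries F} :
    x ∈ (IsLocalRing.maximalIdeal (PowerSeries F)) ^ n ↔
      ∀ i < n, PowerSeries.coeff (R := F) i x = 0 := by
  rw [PowerSeries.maximalIdeal_eq_span_X, Ideal.span_singleton_pow, Ideal.mem_span_singleton,
    PowerSeries.X_pow_dvd_iff]

instance psAdicComplete :
    IsAdicComplete (IsLocalRing.maximalIdeal (PowerSeries F)) (PowerSeries F) where
  haus' x hx := by
    ext n
    have h := hx (n + 1)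
    simp only [← Ideal.one_eq_top, smul_eq_mul, mul_one, SModEq.sub_mem, sub_zero,
      mem_maxPow_iff] at h
    simpa using h n (Nat.lt_succ_self n)
  prec' f hf := by
    refine ⟨PowerSeries.mk fun i => PowerSeries.coeff (R := F) i (f (i + 1)), fun {n} => ?_⟩
    simp only [← Ideal.one_eq_top, smul_eq_mul, mul_one, SModEq.sub_mem, mem_maxPow_iff]
    intro i hi
    have h := hf (Nat.succ_le_of_lt hi)
    simp only [← Ideal.one_eq_top, smul_eq_mul, mul_one, SModEq.sub_mem, mem_maxPow_iff] at h
    have h2 := h i (Nat.lt_succ_self i)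
    simp only [map_sub, PowerSeries.coeff_mk] at h2 ⊢
    rw [sub_eq_zero] at h2 ⊢
    exact h2.symm

lemma psToKbar_injective : Function.Injective (psToKbar F) := by
  have h1 : Function.Injective (algebraMap (PowerSeries F) (LaurentSeries F)) :=
    IsFractionRing.injective _ _
  have h2 : Function.Injective (algebraMap (LaurentSeries F) (AlgebraicClosure (LaurentSeries F))) :=
    (algebraMap (LaurentSeries F) (AlgebraicClosure (LaurentSeries F))).injective
  simpa [psToKbar, RingHom.coe_comp] using h2.comp h1

lemma tbar_ne_zero : tbar F ≠ 0 := by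
  have : (PowerSeries.X : PowerSeries F) ≠ 0 := PowerSeries.X_ne_zero
  exact fun h => this (psToKbar_injective (by simpa [tbar] using h))

lemma tbar_inv_not_integral :
    letI : Algebra (PowerSeries F) (AlgebraicClosure (LaurentSeries F)) := (psToKbar F).toAlgebra
    ¬ IsIntegral (PowerSeries F) (tbar F)⁻¹ := by
  letI : Algebra (PowerSeries F) (AlgebraicClosure (LaurentSeries F)) := (psToKbar F).toAlgebra
  intro h
  set xL : LaurentSeries F := algebraMap (PowerSeries F) (LaurentSeries F) PowerSeries.X with hxL
  have hxLne : xL ≠ 0 :=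
    (map_ne_zero_iff _ (IsFractionRing.injective _ _)).mpr PowerSeries.X_ne_zero
  have htb : tbar F = algebraMap (LaurentSeries F) (AlgebraicClosure (LaurentSeries F)) xL := rfl
  have hinv : (tbar F)⁻¹ =
      algebraMap (LaurentSeries F) (AlgebraicClosure (LaurentSeries F)) xL⁻¹ := by
    rw [htb, map_inv₀]
  rw [hinv] at h
  obtain ⟨f, hfm, hf0⟩ := h
  have hcomp : ((algebraMap (LaurentSeries F) (AlgebraicClosure (LaurentSeries F))).comp
      (algebraMap (PowerSeries F) (LaurentSeries F))) =
      algebraMap (PowerSeries F) (AlgebraicClosure (LaurentSeries F)) := rfl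
  have h2 : IsIntegral (PowerSeries F) (xL⁻¹) := by
    refine ⟨f, hfm, ?_⟩
    apply (algebraMap (LaurentSeries F) (AlgebraicClosure (LaurentSeries F))).injective
    rw [map_zero, Polynomial.hom_eval₂, hcomp]
    exact hf0
  obtain ⟨y, hy⟩ := IsIntegrallyClosed.isIntegral_iff.mp h2
  have hone : algebraMap (PowerSeries F) (LaurentSeries F) (y * PowerSeries.X) = 1 := by
    rw [map_mul, hy, ← hxL]
    exact inv_mul_cancel₀ hxLne
  have hyX : y * PowerSeries.X = 1 :=
    IsFractionRing.injective (PowerSeries F) (LaurentSeries F) (by rw [hone, map_one])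
  have hcc := congrArg (PowerSeries.constantCoeff (R := F)) hyX
  simp [PowerSeries.constantCoeff_X] at hcc

end Aux

set_option maxHeartbeats 1600000 in
/-- `d(k, 0) = 1`: the characteristic polynomial `det(X·I - U^{(k)})` has exactly one
root `λ` (with multiplicity) in `K̄` with `v(λ) = 0`. -/
theorem dDim_zero_eq_one
    (p q : ℕ) (hp : p.Prime) (hq : ∃ e : ℕ, 1 ≤ e ∧ q = p ^ e)
    (F : Type) [Field F] [Fintype F] (hF : Fintype.card F = q)
    (k : ℕ) (hk : 2 ≤ k) :
    dDim F q k 0 = 1 := by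
  classical
  letI : Algebra (PowerSeries F) (AlgebraicClosure (LaurentSeries F)) := (psToKbar F).toAlgebra
  haveI : NeZero (k - 1) := ⟨by omega⟩
  set σ : Polynomial F →+* F := (PowerSeries.constantCoeff (R := F)).comp (polyToPS F) with hσdef
  have hσX : σ Polynomial.X = 0 := by
    simp only [hσdef, RingHom.comp_apply, polyToPS, Polynomial.coeToPowerSeries.ringHom_apply,
      Polynomial.coe_X, PowerSeries.constantCoeff_X]
  -- the reduction of `Umat` mod `t`
  have hzero : ∀ i j : Fin (k - 1), (i : ℕ) < (j : ℕ) → ((Umat F q k).map σ) i j = 0 := by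
    intro i j hij
    have hne : (i : ℕ) ≠ (j : ℕ) := Nat.ne_of_lt hij
    have hj : (j : ℕ) ≠ 0 := (Nat.pos_of_ne_zero (fun h => by omega)).ne'
    simp only [Matrix.map_apply, Umat, Matrix.of_apply, Uent, if_neg hne]
    split_ifs with h
    · simp [map_neg, map_mul, map_pow, hσX, zero_pow hj]
    · simp
  have hdiag : ∀ i : Fin (k - 1),
      ((Umat F q k).map σ) i i = if (i : ℕ) = 0 then 1 else 0 := by
    intro i
    simp only [Matrix.map_apply, Umat, Matrix.of_apply, Uent, if_pos rfl]
    by_cases hi : (i : ℕ) = 0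
    · rw [if_pos hi, hi]
      have h1 : intChoose ((k : ℤ) - 2) (0 : ℤ) = 1 := by
        rw [intChoose, if_pos ⟨by push_cast; omega, le_refl _, by push_cast; omega⟩]
        simp
      simp [h1, map_intCast]
    · rw [if_neg hi]
      simp [map_mul, map_pow, map_neg, hσX, zero_pow hi]
  -- the characteristic polynomial of the reduction
  have hchar0 : ((Umat F q k).map σ).charpoly =
      (Polynomial.X - Polynomial.C 1) * Polynomial.X ^ (k - 2) := by
    rw [Matrix.charpoly, Matrix.det_of_lowerTriangular _ (fun i j hij => by
      refine (Matrix.charmatrix_apply_ne _ _ _ (fun h => ?_)).trans ?_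
      · subst h; exact lt_irrefl _ hij
      · rw [hzero i j (by exact_mod_cast hij), map_zero, neg_zero])]
    have hsimp : ∀ i : Fin (k - 1), Matrix.charmatrix ((Umat F q k).map σ) i i =
        Polynomial.X - Polynomial.C (if (i : ℕ) = 0 then 1 else 0) := by
      intro i; rw [Matrix.charmatrix_apply_eq, hdiag i]
    rw [Finset.prod_congr rfl fun i _ => hsimp i]
    rw [← Finset.mul_prod_erase Finset.univ _ (Finset.mem_univ (0 : Fin (k - 1)))]
    have h0 : ((0 : Fin (k - 1)) : ℕ) = 0 := rfl
    rw [if_pos h0]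
    congr 1
    have hX : ∀ i ∈ Finset.univ.erase (0 : Fin (k - 1)),
        Polynomial.X - Polynomial.C (if (i : ℕ) = 0 then (1 : F) else 0) = Polynomial.X := by
      intro i hi
      have : (i : ℕ) ≠ 0 := by
        intro h
        exact (Finset.mem_erase.mp hi).1 (Fin.ext (by simp [h]))
      rw [if_neg this, map_zero, sub_zero]
    rw [Finset.prod_congr rfl hX, Finset.prod_const,
      Finset.card_erase_of_mem (Finset.mem_univ _), Finset.card_univ, Fintype.card_fin,
      show k - 1 - 1 = k - 2 from by omega]
  -- the charpoly over the power series ring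
  set f' : Polynomial (PowerSeries F) := ((Umat F q k).charpoly).map (polyToPS F) with hf'def
  have hf'monic : f'.Monic := (Matrix.charpoly_monic _).map _
  have hf'map : f'.map (PowerSeries.constantCoeff (R := F)) =
      (Polynomial.X - Polynomial.C 1) * Polynomial.X ^ (k - 2) := by
    rw [hf'def, Polynomial.map_map, ← hσdef, ← Matrix.charpoly_map, hchar0]
  -- Hensel's lemma: find the unit root `λ₀`
  have heval1 : PowerSeries.constantCoeff (R := F) (f'.eval 1) = 0 := by
    have := Polynomial.eval₂_at_apply (p := f') (PowerSeries.constantCoeff (R := F)) 1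
    rw [map_one, ← Polynomial.eval_map, hf'map] at this
    rw [← this]
    simp
  have hder1 : PowerSeries.constantCoeff (R := F) (f'.derivative.eval 1) = 1 := by
    have h := Polynomial.eval₂_at_apply (p := f'.derivative) (PowerSeries.constantCoeff (R := F)) 1
    rw [map_one, ← Polynomial.eval_map] at h
    rw [← h, ← Polynomial.derivative_map, hf'map]
    simp [Polynomial.derivative_mul, Polynomial.derivative_X_pow]
  obtain ⟨lam0, hroot, hmem⟩ :=
    HenselianRing.is_henselian (I := IsLocalRing.maximalIdeal (PowerSeries F)) f' hf'monic 1
      (by rw [← PowerSeries.ker_coeff_eq_max_ideal, RingHom.mem_ker]; exact heval1)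
      (IsUnit.map _ (PowerSeries.isUnit_iff_constantCoeff.mpr (by rw [hder1]; exact isUnit_one)))
  have hlamc : PowerSeries.constantCoeff (R := F) lam0 = 1 := by
    rw [← PowerSeries.ker_coeff_eq_max_ideal, RingHom.mem_ker, map_sub, map_one,
      sub_eq_zero] at hmem
    exact hmem
  -- the complementary factor `g`
  set g : Polynomial (PowerSeries F) := f' /ₘ (Polynomial.X - Polynomial.C lam0) with hgdef
  have hfact : (Polynomial.X - Polynomial.C lam0) * g = f' :=
    Polynomial.mul_divByMonic_eq_iff_isRoot.mpr hroot
  have hgmonic : g.Monic :=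
    (Polynomial.monic_X_sub_C lam0).of_mul_monic_left (by rw [hfact]; exact hf'monic)
  have hgres : g.map (PowerSeries.constantCoeff (R := F)) = Polynomial.X ^ (k - 2) := by
    have hmapped := congrArg (Polynomial.map (PowerSeries.constantCoeff (R := F))) hfact
    rw [Polynomial.map_mul, Polynomial.map_sub, Polynomial.map_X, Polynomial.map_C, hlamc,
      hf'map] at hmapped
    exact mul_left_cancel₀ (Polynomial.X_sub_C_ne_zero 1) hmapped
  have hgdeg : g.natDegree = k - 2 := by
    have := hgmonic.natDegree_map (PowerSeries.constantCoeff (R := F))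
    rw [hgres, Polynomial.natDegree_X_pow] at this
    exact this.symm
  have hgcoeff : ∀ i < k - 2, PowerSeries.constantCoeff (R := F) (g.coeff i) = 0 := by
    intro i hi
    have := congrArg (fun P => Polynomial.coeff P i) hgres
    simp only [Polynomial.coeff_map, Polynomial.coeff_X_pow] at this
    rw [this, if_neg (by omega)]
  -- pass to the algebraic closure
  set ψ := psToKbar F with hψdef
  set lamb := ψ lam0 with hlambdef
  set gb := g.map ψ with hgbdef
  have hgbmonic : gb.Monic := hgmonic.map ψ
  have hgbdeg : gb.natDegree = k - 2 := by
    rw [hgbdef, hgmonic.natDegree_map, hgdeg]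
  have hsplit : ((Umat F q k).charpoly).map (polyToKbar F) =
      (Polynomial.X - Polynomial.C lamb) * gb := by
    have hk1 : polyToKbar F = ψ.comp (polyToPS F) := rfl
    rw [hk1, ← Polynomial.map_map, ← hf'def, ← hfact, Polynomial.map_mul, Polynomial.map_sub,
      Polynomial.map_X, Polynomial.map_C]
  have hprodne : (Polynomial.X - Polynomial.C lamb) * gb ≠ 0 :=
    ((Polynomial.monic_X_sub_C lamb).mul hgbmonic).ne_zero
  have hroots : (((Umat F q k).charpoly).map (polyToKbar F)).roots = lamb ::ₘ gb.roots := by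
    rw [hsplit, Polynomial.roots_mul hprodne, Polynomial.roots_X_sub_C, Multiset.singleton_add]
  -- the distinguished root has valuation zero
  have hlam0ne : lam0 ≠ 0 := fun h => by
    rw [h, map_zero] at hlamc; exact zero_ne_one hlamc
  have hlambne : lamb ≠ 0 := fun h => hlam0ne (psToKbar_injective (by rwa [map_zero]))
  have hPlamb : HasVal F lamb 0 := by
    refine ⟨hlambne, 0, 1, one_pos, by norm_num, ?_, ?_⟩
    · have h1 : lamb ^ (1 : ℤ) / tbar F ^ (0 : ℤ) = lamb := by
        rw [zpow_one, zpow_zero, div_one]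
      rw [h1]
      exact isIntegral_algebraMap (x := lam0)
    · have hu : IsUnit lam0 :=
        PowerSeries.isUnit_iff_constantCoeff.mpr (by rw [hlamc]; exact isUnit_one)
      obtain ⟨u, hu'⟩ := hu
      have hinv : tbar F ^ (0 : ℤ) / lamb ^ (1 : ℤ) = ψ ↑u⁻¹ := by
        rw [zpow_one, zpow_zero, div_eq_iff hlambne, hlambdef, ← hu', ← map_mul,
          show ((↑u⁻¹ : PowerSeries F) * ↑u) = 1 from u.inv_mul, map_one]
      rw [hinv]
      exact isIntegral_algebraMap (x := (↑u⁻¹ : PowerSeries F))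
  -- no root of `g` has valuation zero
  have hclaim : ∀ mu ∈ gb.roots, ¬ HasVal F mu 0 := by
    intro mu hmu hval
    obtain ⟨hmune, a, b, hb, hab, -, hint⟩ := hval
    have hmuroot : gb.IsRoot mu := ((Polynomial.mem_roots hgbmonic.ne_zero).mp hmu)
    have ha : a = 0 := by
      rcases div_eq_zero_iff.mp hab.symm with h | h
      · exact_mod_cast h
      · exact absurd (by exact_mod_cast h : b = 0) (by omega)
    subst ha
    lift b to ℕ using hb.le with b'
    have hb' : 0 < b' := by exact_mod_cast hb
    have hint0 : IsIntegral (PowerSeries F) ((mu⁻¹) ^ b') := by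
      have h0 : IsIntegral (PowerSeries F) (tbar F ^ (0 : ℤ) / mu ^ (b' : ℤ)) := hint
      simpa [zpow_natCast, one_div, inv_pow] using h0
    have hinvint : IsIntegral (PowerSeries F) mu⁻¹ := IsIntegral.of_pow hb' hint0
    -- write the low coefficients of `g` as `t * d i`
    have hcoeffs : ∀ i : ℕ, ∃ d : PowerSeries F,
        i < k - 2 → g.coeff i = PowerSeries.X * d := by
      intro i
      by_cases hi : i < k - 2
      · obtain ⟨d, hd⟩ := (PowerSeries.X_dvd_iff).mpr (hgcoeff i hi)
        exact ⟨d, fun _ => hd⟩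
      · exact ⟨0, fun h => absurd h hi⟩
    choose d hd using hcoeffs
    have hterm : ∀ i ∈ Finset.range (k - 2), gb.coeff i = tbar F * ψ (d i) := by
      intro i hi
      have h1 : gb.coeff i = ψ (g.coeff i) := Polynomial.coeff_map ψ i
      rw [h1, hd i (Finset.mem_range.mp hi), map_mul]
      rfl
    -- evaluate at the root
    have he : ∑ i ∈ Finset.range (k - 2 + 1), gb.coeff i * mu ^ i = 0 := by
      have := hmuroot
      rwa [Polynomial.IsRoot, Polynomial.eval_eq_sum_range' (n := k - 2 + 1) (by omega) mu]
        at this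
    rw [Finset.sum_range_succ, show gb.coeff (k - 2) = 1 by
        have := hgbmonic.coeff_natDegree; rwa [hgbdeg] at this] at he
    have hmun : mu ^ (k - 2) = -∑ i ∈ Finset.range (k - 2), gb.coeff i * mu ^ i := by
      have he' : (∑ i ∈ Finset.range (k - 2), gb.coeff i * mu ^ i) + mu ^ (k - 2) = 0 := by
        simpa using he
      exact eq_neg_of_add_eq_zero_left (by rwa [add_comm] at he')
    -- the sum giving `t⁻¹`
    set w : AlgebraicClosure (LaurentSeries F) :=
      -∑ i ∈ Finset.range (k - 2), ψ (d i) * (mu⁻¹) ^ (k - 2 - i) with hwdef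
    have hpowsplit : ∀ i ∈ Finset.range (k - 2), (mu⁻¹ : AlgebraicClosure (LaurentSeries F))
        ^ (k - 2 - i) = mu ^ i * (mu⁻¹) ^ (k - 2) := by
      intro i hi
      have hile : i ≤ k - 2 := (Finset.mem_range.mp hi).le
      calc (mu⁻¹) ^ (k - 2 - i) = 1 * (mu⁻¹) ^ (k - 2 - i) := (one_mul _).symm
        _ = (mu * mu⁻¹) ^ i * (mu⁻¹) ^ (k - 2 - i) := by rw [mul_inv_cancel₀ hmune, one_pow]
        _ = mu ^ i * ((mu⁻¹) ^ i * (mu⁻¹) ^ (k - 2 - i)) := by rw [mul_pow]; ring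
        _ = mu ^ i * (mu⁻¹) ^ (k - 2) := by rw [← pow_add, Nat.add_sub_cancel' hile]
    have hkey : tbar F * w = 1 := by
      rw [hwdef, mul_neg, Finset.mul_sum]
      have : ∀ i ∈ Finset.range (k - 2),
          tbar F * (ψ (d i) * (mu⁻¹) ^ (k - 2 - i)) = (gb.coeff i * mu ^ i) * (mu⁻¹) ^ (k - 2) := by
        intro i hi
        rw [← mul_assoc, ← hterm i hi, hpowsplit i hi]
        ring
      rw [Finset.sum_congr rfl this, ← Finset.sum_mul, ← neg_mul, ← hmun, ← mul_pow,
        mul_inv_cancel₀ hmune, one_pow]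
    have hwint : IsIntegral (PowerSeries F) w := by
      have hwmem : w ∈ integralClosure (PowerSeries F) (AlgebraicClosure (LaurentSeries F)) := by
        refine neg_mem (sum_mem fun i hi => mul_mem ?_ (pow_mem ?_ _))
        · exact Subalgebra.algebraMap_mem _ (d i)
        · exact (mem_integralClosure_iff _ _).mpr hinvint
      exact (mem_integralClosure_iff _ _).mp hwmem
    have htinv : (tbar F)⁻¹ = w := inv_eq_of_mul_eq_one_right hkey
    exact tbar_inv_not_integral (htinv ▸ hwint)
  -- conclude
  rw [dDim, hroots, Multiset.filter_cons, if_pos hPlamb,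
    Multiset.filter_eq_nil.mpr hclaim, Multiset.card_add, Multiset.card_singleton,
    Multiset.card_zero]

end DrinfeldGM
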